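/- Let p be a probability distribution on a finite set {x_1, ..., x_K} with p(x_k) > 0 for every k. For each N, let D_N consist of N i.i.d. samples from p and let Ĥ_mle(D_N) be the plug-in entropy estimator. Then N · (E[Ĥ_mle(D_N)] − H(p)) → −(K − 1)/2 as N → ∞; equivalently, the bias of the plug-in estimator is −(K−1)/(2N) + o(1/N) (the Miller–Madow bias formula). -/

import Mathlib

open Finset Real Filter

/-- Shannon entropy of a finite distribution (convention `0 * log 0 = 0`). -/
noncomputable def entropy {K : ℕ} (p : Fin K → ℝ) : ℝ := -∑ k, p k * Real.log (p k)

/-- The empirical (maximum-likelihood) distribution of a dataset of `N` samples. -/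
noncomputable def empirical {N K : ℕ} (D : Fin N → Fin K) (k : Fin K) : ℝ :=
  ((Finset.univ.filter (fun n => D n = k)).card : ℝ) / N

/-- Expectation of a statistic over `N` i.i.d. samples from `p`. -/
noncomputable def expect {N K : ℕ} (p : Fin K → ℝ) (f : (Fin N → Fin K) → ℝ) : ℝ :=
  ∑ D : Fin N → Fin K, (∏ n, p (D n)) * f D

open Polynomial

set_option maxHeartbeats 1000000

lemma iter_deriv_CXpow (a : ℝ) (m j : ℕ) :
    derivative^[j] (C a * X ^ m) = C (a * (m.descFactorial j : ℝ)) * X ^ (m - j) := by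
  induction j with
  | zero => simp
  | succ j ih =>
    rw [Function.iterate_succ_apply', ih, derivative_C_mul, derivative_X_pow,
      Nat.descFactorial_succ, Nat.sub_sub]
    push_cast
    simp only [C_mul]
    ring

lemma iter_deriv_linpow (a b : ℝ) (m j : ℕ) :
    derivative^[j] ((C a * X + C b) ^ m)
      = C (a ^ j * (m.descFactorial j : ℝ)) * (C a * X + C b) ^ (m - j) := by
  induction j with
  | zero => simp
  | succ j ih =>
    rw [Function.iterate_succ_apply', ih, derivative_C_mul, derivative_pow]
    have h : derivative (C a * X + C b) = C a := by simp
    rw [h, Nat.descFactorial_succ, Nat.sub_sub]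
    push_cast
    simp only [C_mul, C_pow]
    ring_nf

lemma pgf {N K : ℕ} (p : Fin K → ℝ) (hsum : ∑ k, p k = 1) (k : Fin K) :
    ∑ D : Fin N → Fin K,
        C (∏ n, p (D n)) * (X : ℝ[X]) ^ (Finset.univ.filter (fun n => D n = k)).card
      = (C (p k) * X + C (1 - p k)) ^ N := by
  have h1 : (C (p k) * X + C (1 - p k) : ℝ[X])
      = ∑ j, C (p j) * (if j = k then X else 1) := by
    rw [← Finset.add_sum_erase Finset.univ _ (Finset.mem_univ k)]
    simp only [if_pos rfl]
    congr 1
    have herase : ∑ j ∈ Finset.univ.erase k, p j = 1 - p k := by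
      have := Finset.add_sum_erase Finset.univ p (Finset.mem_univ k)
      rw [hsum] at this; linarith
    rw [← herase, map_sum]
    apply Finset.sum_congr rfl
    intro j hj
    rw [if_neg (Finset.mem_erase.1 hj).1, mul_one]
  rw [h1, ← Fin.prod_const N (∑ j, C (p j) * (if j = k then (X:ℝ[X]) else 1))]
  rw [Finset.prod_univ_sum]
  rw [Fintype.piFinset_univ]
  apply Finset.sum_congr rfl
  intro D _
  rw [Finset.prod_mul_distrib, ← map_prod]
  congr 1
  symm
  calc ∏ n, (if D n = k then (X:ℝ[X]) else 1)
      = ∏ n, (X:ℝ[X]) ^ (if D n = k then 1 else 0) := by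
        apply Finset.prod_congr rfl; intro n _; split <;> simp
    _ = (X:ℝ[X]) ^ ∑ n, (if D n = k then 1 else 0) := by
        rw [Finset.prod_pow_eq_pow_sum]
    _ = _ := by rw [← Finset.card_filter]

lemma master {N K : ℕ} (p : Fin K → ℝ) (hsum : ∑ k, p k = 1) (k : Fin K) (j : ℕ) :
    ∑ D : Fin N → Fin K,
        (∏ n, p (D n)) * (((Finset.univ.filter (fun n => D n = k)).card.descFactorial j : ℕ) : ℝ)
      = p k ^ j * (N.descFactorial j : ℝ) := by
  have h := congrArg (fun P : ℝ[X] => Polynomial.eval 1 (derivative^[j] P)) (pgf (N:=N) p hsum k)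
  rw [Polynomial.iterate_derivative_sum, Polynomial.eval_finset_sum, iter_deriv_linpow] at h
  simp only [iter_deriv_CXpow] at h
  simpa [Polynomial.eval_prod] using h

lemma cast_descFactorial (c j : ℕ) :
    ((c.descFactorial j : ℕ) : ℝ) = ∏ i ∈ Finset.range j, ((c : ℝ) - i) := by
  induction j with
  | zero => simp
  | succ j ih =>
    rw [Nat.descFactorial_succ, Finset.prod_range_succ, ← ih]
    rcases le_or_gt j c with h | h
    · push_cast [h]; ring
    · have h1 : c.descFactorial j = 0 := Nat.descFactorial_eq_zero_iff_lt.2 h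
      have h2 : c - j = 0 := Nat.sub_eq_zero_of_le h.le
      simp [h1, h2]

noncomputable def wgt {N K : ℕ} (p : Fin K → ℝ) (D : Fin N → Fin K) : ℝ := ∏ n, p (D n)

def cnt {N K : ℕ} (k : Fin K) (D : Fin N → Fin K) : ℕ :=
  (Finset.univ.filter (fun n => D n = k)).card

lemma master' {N K : ℕ} (p : Fin K → ℝ) (hsum : ∑ k, p k = 1) (k : Fin K) (j : ℕ) :
    ∑ D : Fin N → Fin K, wgt p D * (((cnt k D).descFactorial j : ℕ) : ℝ)
      = p k ^ j * (N.descFactorial j : ℝ) := master p hsum k j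

lemma moment0 {N K : ℕ} (p : Fin K → ℝ) (hsum : ∑ k, p k = 1) (k : Fin K) :
    ∑ D : Fin N → Fin K, wgt p D = 1 := by
  have h := master' (N := N) p hsum k 0
  simpa using h

lemma moment1 {N K : ℕ} (p : Fin K → ℝ) (hsum : ∑ k, p k = 1) (k : Fin K) :
    ∑ D : Fin N → Fin K, wgt p D * ((cnt k D : ℕ) : ℝ) = N * p k := by
  have h := master' (N := N) p hsum k 1
  simpa [mul_comm] using h

lemma moment2 {N K : ℕ} (p : Fin K → ℝ) (hsum : ∑ k, p k = 1) (k : Fin K) :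
    ∑ D : Fin N → Fin K, wgt p D * (((cnt k D : ℕ) : ℝ) - N * p k)^2
      = N * p k * (1 - p k) := by
  have key : ∀ c : ℕ, ((c:ℝ) - N * p k)^2
      = ((c.descFactorial 2 : ℕ) : ℝ)
        + (1 - 2*(N*p k)) * ((c.descFactorial 1 : ℕ) : ℝ)
        + (N*p k)^2 * ((c.descFactorial 0 : ℕ) : ℝ) := by
    intro c
    simp only [cast_descFactorial, Finset.prod_range_succ, Finset.prod_range_zero]
    push_cast; ring
  calc ∑ D : Fin N → Fin K, wgt p D * (((cnt k D : ℕ) : ℝ) - N * p k)^2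
      = ∑ D : Fin N → Fin K,
          (wgt p D * (((cnt k D).descFactorial 2 : ℕ) : ℝ)
          + (1 - 2*(N*p k)) * (wgt p D * (((cnt k D).descFactorial 1 : ℕ) : ℝ))
          + (N*p k)^2 * (wgt p D * (((cnt k D).descFactorial 0 : ℕ) : ℝ))) := by
        apply Finset.sum_congr rfl; intro D _
        rw [key]; ring
    _ = (∑ D : Fin N → Fin K, wgt p D * (((cnt k D).descFactorial 2 : ℕ) : ℝ))
          + (1 - 2*(N*p k)) * (∑ D : Fin N → Fin K, wgt p D * (((cnt k D).descFactorial 1 : ℕ) : ℝ))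
          + (N*p k)^2 * (∑ D : Fin N → Fin K, wgt p D * (((cnt k D).descFactorial 0 : ℕ) : ℝ)) := by
        rw [Finset.sum_add_distrib, Finset.sum_add_distrib, ← Finset.mul_sum, ← Finset.mul_sum]
    _ = N * p k * (1 - p k) := by
        rw [master' p hsum k 2, master' p hsum k 1, master' p hsum k 0]
        simp only [cast_descFactorial, Finset.prod_range_succ, Finset.prod_range_zero]
        push_cast; ring

lemma moment4 {N K : ℕ} (p : Fin K → ℝ) (hsum : ∑ k, p k = 1) (k : Fin K) :
    ∑ D : Fin N → Fin K, wgt p D * (((cnt k D : ℕ) : ℝ) - N * p k)^4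
      = N * p k * (1 - p k) * (1 + 3 * ((N:ℝ) - 2) * p k * (1 - p k)) := by
  set a : ℝ := N * p k with ha
  have key : ∀ c : ℕ, ((c:ℝ) - a)^4
      = ((c.descFactorial 4 : ℕ) : ℝ)
        + (6 - 4*a) * ((c.descFactorial 3 : ℕ) : ℝ)
        + (7 - 12*a + 6*a^2) * ((c.descFactorial 2 : ℕ) : ℝ)
        + (1 - 4*a + 6*a^2 - 4*a^3) * ((c.descFactorial 1 : ℕ) : ℝ)
        + a^4 * ((c.descFactorial 0 : ℕ) : ℝ) := by
    intro c
    simp only [cast_descFactorial, Finset.prod_range_succ, Finset.prod_range_zero]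
    push_cast; ring
  calc ∑ D : Fin N → Fin K, wgt p D * (((cnt k D : ℕ) : ℝ) - a)^4
      = ∑ D : Fin N → Fin K,
          (wgt p D * (((cnt k D).descFactorial 4 : ℕ) : ℝ)
          + (6 - 4*a) * (wgt p D * (((cnt k D).descFactorial 3 : ℕ) : ℝ))
          + (7 - 12*a + 6*a^2) * (wgt p D * (((cnt k D).descFactorial 2 : ℕ) : ℝ))
          + (1 - 4*a + 6*a^2 - 4*a^3) * (wgt p D * (((cnt k D).descFactorial 1 : ℕ) : ℝ))
          + a^4 * (wgt p D * (((cnt k D).descFactorial 0 : ℕ) : ℝ))) := by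
        apply Finset.sum_congr rfl; intro D _
        rw [key]; ring
    _ = (∑ D : Fin N → Fin K, wgt p D * (((cnt k D).descFactorial 4 : ℕ) : ℝ))
          + (6 - 4*a) * (∑ D : Fin N → Fin K, wgt p D * (((cnt k D).descFactorial 3 : ℕ) : ℝ))
          + (7 - 12*a + 6*a^2) * (∑ D : Fin N → Fin K, wgt p D * (((cnt k D).descFactorial 2 : ℕ) : ℝ))
          + (1 - 4*a + 6*a^2 - 4*a^3) * (∑ D : Fin N → Fin K, wgt p D * (((cnt k D).descFactorial 1 : ℕ) : ℝ))
          + a^4 * (∑ D : Fin N → Fin K, wgt p D * (((cnt k D).descFactorial 0 : ℕ) : ℝ)) := by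
        rw [Finset.sum_add_distrib, Finset.sum_add_distrib, Finset.sum_add_distrib,
          Finset.sum_add_distrib, ← Finset.mul_sum, ← Finset.mul_sum, ← Finset.mul_sum,
          ← Finset.mul_sum]
    _ = _ := by
        rw [master' p hsum k 4, master' p hsum k 3, master' p hsum k 2, master' p hsum k 1,
          master' p hsum k 0]
        simp only [cast_descFactorial, Finset.prod_range_succ, Finset.prod_range_zero]
        push_cast; ring

lemma taylor_xlogx {pk : ℝ} (hp : 0 < pk) (hp1 : pk ≤ 1) :
    ∃ A : ℝ, 0 ≤ A ∧ ∀ x : ℝ, 0 ≤ x → x ≤ 1 →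
      |x * Real.log x - pk * Real.log pk - (Real.log pk + 1) * (x - pk)
        - (x - pk)^2 / (2*pk)| ≤ A * |x - pk|^3 := by
  refine ⟨7/(2*pk^2) + 40/pk^4, by positivity, ?_⟩
  intro x hx0 hx1
  rcases le_or_gt |x - pk| (pk/2) with hnear | hfar
  · -- near case
    set u : ℝ := (x - pk)/pk with hu
    have hxu : x = pk * (1 + u) := by rw [hu]; field_simp; ring
    have habsu : |u| ≤ 1/2 := by
      rw [hu, abs_div, abs_of_pos hp]
      rw [div_le_div_iff₀ hp (by norm_num)]
      linarith
    have habsu1 : |u| < 1 := lt_of_le_of_lt habsu (by norm_num)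
    have h1u : (0:ℝ) < 1 + u := by
      have := abs_le.1 habsu; linarith [this.1]
    have hlog := Real.abs_log_sub_add_sum_range_le (x := -u) (by rwa [abs_neg]) 2
    have hsum2 : (∑ i ∈ Finset.range 2, (-u) ^ (i + 1) / (i + 1)) = -u + u^2/2 := by
      simp [Finset.sum_range_succ]
      ring
    rw [hsum2, abs_neg, sub_neg_eq_add] at hlog
    set E : ℝ := Real.log (1 + u) - u + u^2/2 with hE
    have hEbound : |E| ≤ 2 * |u|^3 := by
      have h12 : 1/2 ≤ 1 - |u| := by linarith
      have : |u|^3 / (1 - |u|) ≤ |u|^3 / (1/2) :=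
        div_le_div_of_nonneg_left (by positivity) (by norm_num) h12
      have h2 : |(-u + u^2/2) + Real.log (1 + u)| = |E| := by
        rw [hE]; ring_nf
      rw [h2] at hlog
      calc |E| ≤ |u|^3/(1 - |u|) := hlog
        _ ≤ |u|^3/(1/2) := this
        _ = 2*|u|^3 := by ring
    have hlogx : Real.log x = Real.log pk + Real.log (1 + u) := by
      rw [hxu, Real.log_mul hp.ne' h1u.ne']
    have hrepr : x * Real.log x - pk * Real.log pk - (Real.log pk + 1) * (x - pk)
        - (x - pk)^2 / (2*pk) = pk * ((1 + u) * E - u^3/2) := by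
      have hxpk : x - pk = pk * u := by rw [hxu]; ring
      have hlog1u : Real.log (1 + u) = E + u - u^2/2 := by rw [hE]; ring
      rw [hlogx, hlog1u, hxu]
      field_simp
      ring
    rw [hrepr, abs_mul, abs_of_pos hp]
    have h1ub : |1 + u| ≤ 3/2 := by
      have := abs_le.1 habsu; rw [abs_le]; constructor <;> linarith
    have hinner : |(1 + u) * E - u^3/2| ≤ (7/2) * |u|^3 := by
      have h1 : |(1 + u) * E| ≤ (3/2) * (2 * |u|^3) := by
        rw [abs_mul]
        apply mul_le_mul h1ub hEbound (abs_nonneg _) (by norm_num)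
      have h2 : |u^3/2| ≤ |u|^3/2 := by
        rw [abs_div, abs_pow]; norm_num
      calc |(1 + u) * E - u^3/2| ≤ |(1 + u) * E| + |u^3/2| := abs_sub _ _
        _ ≤ (3/2) * (2 * |u|^3) + |u|^3/2 := by linarith
        _ = (7/2) * |u|^3 := by ring
    have huabs : |u| = |x - pk|/pk := by rw [hu, abs_div, abs_of_pos hp]
    calc pk * |(1 + u) * E - u^3/2| ≤ pk * ((7/2) * |u|^3) := by
          apply mul_le_mul_of_nonneg_left hinner hp.le
      _ = (7/(2*pk^2)) * |x - pk|^3 := by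
          rw [huabs]; field_simp
      _ ≤ (7/(2*pk^2) + 40/pk^4) * |x - pk|^3 := by
          apply mul_le_mul_of_nonneg_right _ (by positivity)
          have : (0:ℝ) < 40/pk^4 := by positivity
          linarith
  · -- far case
    have habs1 : |x - pk| ≤ 1 := by
      rw [abs_le]; constructor <;> linarith
    have t1 : |x * Real.log x| ≤ 1 := by
      rcases eq_or_lt_of_le hx0 with h | h
      · simp [← h]
      · rw [mul_comm]
        exact (Real.abs_log_mul_self_lt x h hx1).le
    have t2 : |pk * Real.log pk| ≤ 1 := by
      rw [mul_comm]
      exact (Real.abs_log_mul_self_lt pk hp hp1).le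
    have hlogpk : |Real.log pk| ≤ 1/pk - 1 := by
      have h1 : Real.log pk ≤ 0 := Real.log_nonpos hp.le hp1
      have h2 : Real.log (1/pk) ≤ 1/pk - 1 := Real.log_le_sub_one_of_pos (by positivity)
      rw [one_div, Real.log_inv] at h2
      rw [abs_of_nonpos h1, one_div]
      linarith
    have t3 : |(Real.log pk + 1) * (x - pk)| ≤ 1/pk := by
      rw [abs_mul]
      have h1 : |Real.log pk + 1| ≤ 1/pk := by
        calc |Real.log pk + 1| ≤ |Real.log pk| + |(1:ℝ)| := abs_add_le _ _
          _ ≤ 1/pk := by rw [abs_one]; linarith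
      calc |Real.log pk + 1| * |x - pk| ≤ (1/pk) * 1 := by
            apply mul_le_mul h1 habs1 (abs_nonneg _) (by positivity)
        _ = 1/pk := by ring
    have t4 : |(x - pk)^2/(2*pk)| ≤ 1/(2*pk) := by
      rw [abs_div, abs_of_pos (by positivity : (0:ℝ) < 2*pk), abs_pow]
      apply div_le_div_of_nonneg_right _ (by positivity)
      calc |x - pk|^2 ≤ 1^2 := by
            apply pow_le_pow_left₀ (abs_nonneg _) habs1
        _ = 1 := one_pow 2
    have hR : |x * Real.log x - pk * Real.log pk - (Real.log pk + 1) * (x - pk)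
        - (x - pk)^2 / (2*pk)| ≤ 2 + 1/pk + 1/(2*pk) := by
      calc |x * Real.log x - pk * Real.log pk - (Real.log pk + 1) * (x - pk)
          - (x - pk)^2 / (2*pk)|
          ≤ |x * Real.log x - pk * Real.log pk - (Real.log pk + 1) * (x - pk)|
            + |(x - pk)^2/(2*pk)| := abs_sub _ _
        _ ≤ (|x * Real.log x - pk * Real.log pk| + |(Real.log pk + 1) * (x - pk)|)
            + |(x - pk)^2/(2*pk)| := by linarith [abs_sub (x * Real.log x - pk * Real.log pk) ((Real.log pk + 1) * (x - pk))]
        _ ≤ (|x * Real.log x| + |pk * Real.log pk| + |(Real.log pk + 1) * (x - pk)|)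
            + |(x - pk)^2/(2*pk)| := by linarith [abs_sub (x * Real.log x) (pk * Real.log pk)]
        _ ≤ 2 + 1/pk + 1/(2*pk) := by linarith
    have hcube : pk^3 ≤ 8 * |x - pk|^3 := by
      have h1 : pk/2 ≤ |x - pk| := hfar.le
      have h2 : (pk/2)^3 ≤ |x - pk|^3 := by
        apply pow_le_pow_left₀ (by positivity) h1
      nlinarith
    have hRA : 2 + 1/pk + 1/(2*pk) ≤ 4/pk := by
      rw [← sub_nonneg]
      have heq : 4/pk - (2 + 1/pk + 1/(2*pk)) = (5 - 4*pk)/(2*pk) := by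
        field_simp; ring
      rw [heq]
      apply div_nonneg (by linarith) (by positivity)
    calc |x * Real.log x - pk * Real.log pk - (Real.log pk + 1) * (x - pk)
        - (x - pk)^2 / (2*pk)| ≤ 4/pk := le_trans hR hRA
      _ ≤ (40/pk^4) * |x - pk|^3 := by
          have key : 4 * pk^3 ≤ 40 * |x - pk|^3 := by linarith [hcube, pow_pos hp 3]
          calc 4/pk = (4*pk^3)/pk^4 := by
                field_simp
            _ ≤ (40*|x - pk|^3)/pk^4 := by
                apply (div_le_div_iff_of_pos_right (by positivity)).2 key
            _ = (40/pk^4) * |x - pk|^3 := by ring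
      _ ≤ (7/(2*pk^2) + 40/pk^4) * |x - pk|^3 := by
          apply mul_le_mul_of_nonneg_right _ (by positivity)
          have : (0:ℝ) < 7/(2*pk^2) := by positivity
          linarith

lemma cube_bound (s : ℝ) (hs : 0 < s) (y : ℝ) :
    |y|^3 ≤ (y^2/s + s*y^4)/2 := by
  have t2 : y^2 = |y|^2 := (sq_abs y).symm
  have t4 : y^4 = |y|^4 := by
    rw [show (4:ℕ) = 2*2 from rfl, pow_mul, pow_mul, sq_abs]
  have key : 2*s*|y|^3 ≤ y^2 + s^2*y^4 := by
    rw [t2, t4]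
    nlinarith [sq_nonneg (|y| - s*|y|^2), abs_nonneg y]
  have heq : (y^2/s + s*y^4)/2 = (y^2 + s^2*y^4)/(2*s) := by
    field_simp
  rw [heq, le_div_iff₀ (by positivity)]
  linarith

lemma per_k {K : ℕ} (p : Fin K → ℝ) (hp : ∀ k, 0 < p k) (hsum : ∑ k, p k = 1) (k : Fin K) :
    Tendsto (fun N : ℕ => (N:ℝ) *
        ((∑ D : Fin N → Fin K, wgt p D * (empirical D k * Real.log (empirical D k)))
          - p k * Real.log (p k)))
      atTop (nhds ((1 - p k)/2)) := by
  set pk := p k with hpk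
  have hpk0 : 0 < pk := hp k
  have hpk1 : pk ≤ 1 := by
    rw [← hsum]
    exact Finset.single_le_sum (f := p) (fun i _ => (hp i).le) (Finset.mem_univ k)
  obtain ⟨A, hA0, hA⟩ := taylor_xlogx hpk0 hpk1
  -- the key quantitative bound
  have hbound : ∀ N : ℕ, 1 ≤ N →
      |(N:ℝ) * ((∑ D : Fin N → Fin K, wgt p D * (empirical D k * Real.log (empirical D k)))
          - pk * Real.log pk) - (1 - pk)/2|
        ≤ A * (pk*(1-pk) + 3) / (2 * Real.sqrt N) := by
    intro N hN
    have hn : (0:ℝ) < N := by exact_mod_cast hN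
    set n : ℝ := (N:ℝ) with hndef
    set s : ℝ := Real.sqrt n with hsdef
    have hs : 0 < s := Real.sqrt_pos.2 hn
    have hss : s * s = n := Real.mul_self_sqrt hn.le
    have hemp : ∀ D : Fin N → Fin K, empirical D k = ((cnt k D : ℕ) : ℝ) / n := by
      intro D; rfl
    have hemp0 : ∀ D : Fin N → Fin K, 0 ≤ empirical D k := by
      intro D; rw [hemp]; positivity
    have hemp1 : ∀ D : Fin N → Fin K, empirical D k ≤ 1 := by
      intro D
      rw [hemp, div_le_one hn]
      have := Finset.card_filter_le Finset.univ (fun n => D n = k)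
      simp only [Finset.card_univ, Fintype.card_fin] at this
      rw [hndef]
      exact_mod_cast this
    have hw0 : ∀ D : Fin N → Fin K, 0 ≤ wgt p D := by
      intro D; exact Finset.prod_nonneg (fun i _ => (hp _).le)
    -- centered moments of the empirical frequency
    have e1 : ∑ D : Fin N → Fin K, wgt p D * (empirical D k - pk) = 0 := by
      calc ∑ D : Fin N → Fin K, wgt p D * (empirical D k - pk)
          = ∑ D : Fin N → Fin K,
              ((1/n) * (wgt p D * ((cnt k D : ℕ) : ℝ)) - pk * wgt p D) := by
            apply Finset.sum_congr rfl; intro D _; rw [hemp]; ring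
        _ = (1/n) * (∑ D : Fin N → Fin K, wgt p D * ((cnt k D : ℕ) : ℝ))
              - pk * ∑ D : Fin N → Fin K, wgt p D := by
            rw [Finset.sum_sub_distrib, ← Finset.mul_sum, ← Finset.mul_sum]
        _ = (1/n) * (n * pk) - pk * 1 := by rw [moment1 p hsum k, moment0 p hsum k]
        _ = 0 := by field_simp; ring
    have e2 : ∑ D : Fin N → Fin K, wgt p D * (empirical D k - pk)^2 = pk*(1-pk)/n := by
      calc ∑ D : Fin N → Fin K, wgt p D * (empirical D k - pk)^2
          = ∑ D : Fin N → Fin K,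
              (1/n^2) * (wgt p D * (((cnt k D : ℕ) : ℝ) - n * pk)^2) := by
            apply Finset.sum_congr rfl; intro D _; rw [hemp]
            field_simp
        _ = (1/n^2) * ∑ D : Fin N → Fin K, wgt p D * (((cnt k D : ℕ) : ℝ) - n * pk)^2 := by
            rw [← Finset.mul_sum]
        _ = (1/n^2) * (n * pk * (1 - pk)) := by rw [moment2 p hsum k]
        _ = pk*(1-pk)/n := by field_simp
    have e4 : ∑ D : Fin N → Fin K, wgt p D * (empirical D k - pk)^4 ≤ 3/n^2 := by
      have heq : ∑ D : Fin N → Fin K, wgt p D * (empirical D k - pk)^4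
          = (1/n^4) * (n * pk * (1 - pk) * (1 + 3 * (n - 2) * pk * (1 - pk))) := by
        calc ∑ D : Fin N → Fin K, wgt p D * (empirical D k - pk)^4
            = ∑ D : Fin N → Fin K,
                (1/n^4) * (wgt p D * (((cnt k D : ℕ) : ℝ) - n * pk)^4) := by
              apply Finset.sum_congr rfl; intro D _; rw [hemp]
              field_simp
          _ = (1/n^4) * ∑ D : Fin N → Fin K, wgt p D * (((cnt k D : ℕ) : ℝ) - n * pk)^4 := by
              rw [← Finset.mul_sum]
          _ = _ := by rw [moment4 p hsum k]
      rw [heq]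
      have hq0 : 0 ≤ pk * (1 - pk) := mul_nonneg hpk0.le (by linarith)
      have hq4 : pk * (1 - pk) ≤ 1/4 := by nlinarith [sq_nonneg (2*pk - 1)]
      have hn1 : (1:ℝ) ≤ n := by rw [hndef]; exact_mod_cast hN
      have hs2 : (pk*(1-pk))^2 ≤ 1/16 := by nlinarith [hq4, hq0]
      have hmu : n * pk * (1 - pk) * (1 + 3 * (n - 2) * pk * (1 - pk)) ≤ 3 * n^2 := by
        have ha : n * (pk*(1-pk)) ≤ n * (1/4) := mul_le_mul_of_nonneg_left hq4 hn.le
        have hb : n^2 * (pk*(1-pk))^2 ≤ n^2 * (1/16) :=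
          mul_le_mul_of_nonneg_left hs2 (sq_nonneg n)
        have hc : 0 ≤ n * (pk*(1-pk))^2 := by positivity
        have hd : n ≤ n^2 := by nlinarith [hn1, hn.le]
        nlinarith [ha, hb, hc, hd]
      calc (1/n^4) * (n * pk * (1 - pk) * (1 + 3 * (n - 2) * pk * (1 - pk)))
          ≤ (1/n^4) * (3 * n^2) := by
            apply mul_le_mul_of_nonneg_left hmu (by positivity)
        _ = 3/n^2 := by field_simp
    -- decomposition using the Taylor remainder
    set R : (Fin N → Fin K) → ℝ := fun D =>
      empirical D k * Real.log (empirical D k) - pk * Real.log pk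
        - (Real.log pk + 1) * (empirical D k - pk) - (empirical D k - pk)^2 / (2*pk)
      with hRdef
    have hdecomp : (∑ D : Fin N → Fin K, wgt p D * (empirical D k * Real.log (empirical D k)))
        - pk * Real.log pk
        = (∑ D : Fin N → Fin K, wgt p D * R D) + (1 - pk)/(2*n) := by
      have step : ∑ D : Fin N → Fin K, wgt p D * (empirical D k * Real.log (empirical D k))
          = (∑ D : Fin N → Fin K, wgt p D * R D)
            + (pk * Real.log pk) * (∑ D : Fin N → Fin K, wgt p D)
            + (Real.log pk + 1) * (∑ D : Fin N → Fin K, wgt p D * (empirical D k - pk))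
            + (1/(2*pk)) * (∑ D : Fin N → Fin K, wgt p D * (empirical D k - pk)^2) := by
        rw [Finset.mul_sum, Finset.mul_sum, Finset.mul_sum, ← Finset.sum_add_distrib,
          ← Finset.sum_add_distrib, ← Finset.sum_add_distrib]
        apply Finset.sum_congr rfl; intro D _
        rw [hRdef]
        have h2pk : (2:ℝ)*pk ≠ 0 := by positivity
        field_simp
        ring
      rw [step, moment0 p hsum k, e1, e2]
      have : (1/(2*pk)) * (pk*(1-pk)/n) = (1-pk)/(2*n) := by
        field_simp
      rw [this]; ring
    -- bound the remainder sum
    have hERbound : |∑ D : Fin N → Fin K, wgt p D * R D|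
        ≤ A * (pk*(1-pk) + 3) / (2 * n * s) := by
      have hptwise : ∀ D : Fin N → Fin K,
          |wgt p D * R D| ≤ wgt p D * (A * (((empirical D k - pk)^2 / s
            + s * (empirical D k - pk)^4)/2)) := by
        intro D
        rw [abs_mul, abs_of_nonneg (hw0 D)]
        apply mul_le_mul_of_nonneg_left _ (hw0 D)
        calc |R D| ≤ A * |empirical D k - pk|^3 := hA _ (hemp0 D) (hemp1 D)
          _ ≤ A * (((empirical D k - pk)^2 / s + s * (empirical D k - pk)^4)/2) := by
              apply mul_le_mul_of_nonneg_left (cube_bound s hs _) hA0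
      calc |∑ D : Fin N → Fin K, wgt p D * R D|
          ≤ ∑ D : Fin N → Fin K, |wgt p D * R D| := Finset.abs_sum_le_sum_abs _ _
        _ ≤ ∑ D : Fin N → Fin K, wgt p D * (A * (((empirical D k - pk)^2 / s
              + s * (empirical D k - pk)^4)/2)) :=
            Finset.sum_le_sum (fun D _ => hptwise D)
        _ = (A/(2*s)) * (∑ D : Fin N → Fin K, wgt p D * (empirical D k - pk)^2)
            + (A*s/2) * (∑ D : Fin N → Fin K, wgt p D * (empirical D k - pk)^4) := by
            rw [Finset.mul_sum, Finset.mul_sum, ← Finset.sum_add_distrib]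
            apply Finset.sum_congr rfl; intro D _
            field_simp
        _ ≤ (A/(2*s)) * (pk*(1-pk)/n) + (A*s/2) * (3/n^2) := by
            apply add_le_add
            · rw [e2]
            · apply mul_le_mul_of_nonneg_left e4 (by positivity)
        _ = A * (pk*(1-pk)) / (2*n*s) + A * 3 * s/(2 * n^2) := by
            field_simp
        _ = A * (pk*(1-pk) + 3) / (2 * n * s) := by
            have hn2 : n^2 = (n*s)*s := by
              rw [mul_assoc, hss]; ring
            rw [hn2]
            field_simp
    rw [hdecomp]
    have hgoal : n * ((∑ D : Fin N → Fin K, wgt p D * R D) + (1 - pk)/(2*n)) - (1 - pk)/2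
        = n * (∑ D : Fin N → Fin K, wgt p D * R D) := by
      field_simp; ring
    rw [hgoal, abs_mul, abs_of_pos hn]
    calc n * |∑ D : Fin N → Fin K, wgt p D * R D|
        ≤ n * (A * (pk*(1-pk) + 3) / (2 * n * s)) :=
          mul_le_mul_of_nonneg_left hERbound hn.le
      _ = A * (pk*(1-pk) + 3) / (2 * s) := by field_simp
  -- conclude via squeezing
  have hzero : Tendsto (fun N : ℕ =>
      (N:ℝ) * ((∑ D : Fin N → Fin K, wgt p D * (empirical D k * Real.log (empirical D k)))
        - pk * Real.log pk) - (1 - pk)/2) atTop (nhds 0) := by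
    apply squeeze_zero_norm' (a := fun N : ℕ => A * (pk*(1-pk) + 3) / (2 * Real.sqrt N))
    · filter_upwards [eventually_ge_atTop 1] with N hN
      exact hbound N hN
    · have h1 : Tendsto (fun N : ℕ => Real.sqrt N) atTop atTop := by
        apply Filter.tendsto_atTop_atTop.2
        intro b
        refine ⟨⌈b^2⌉₊, fun N hN => ?_⟩
        have hb2 : (b:ℝ)^2 ≤ N := le_trans (Nat.le_ceil _) (by exact_mod_cast hN)
        calc b ≤ |b| := le_abs_self b
          _ = Real.sqrt (b^2) := (Real.sqrt_sq_eq_abs b).symm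
          _ ≤ Real.sqrt N := Real.sqrt_le_sqrt hb2
      have h2 : Tendsto (fun N : ℕ => (Real.sqrt N)⁻¹) atTop (nhds 0) :=
        h1.inv_tendsto_atTop
      have h3 := h2.const_mul (A * (pk*(1-pk) + 3) / 2)
      rw [mul_zero] at h3
      convert h3 using 2 with N
      field_simp
  have := hzero.add_const ((1 - pk)/2)
  simp only [zero_add, sub_add_cancel] at this
  exact this

/-- Miller–Madow bias formula: `N · (E[Ĥ_mle(D_N)] − H(p)) → −(K−1)/2` as `N → ∞`;
i.e. the bias of the plug-in estimator is `−(K−1)/(2N) + o(1/N)`. -/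
theorem miller_madow_bias_formula {K : ℕ}
    (p : Fin K → ℝ) (hp : ∀ k, 0 < p k) (hsum : ∑ k, p k = 1) :
    Tendsto
      (fun N : ℕ =>
        (N : ℝ) * (expect p (fun D : Fin N → Fin K => entropy (empirical D)) - entropy p))
      atTop (nhds (-(((K : ℝ) - 1) / 2))) := by
  have hmain : ∀ N : ℕ,
      (N : ℝ) * (expect p (fun D : Fin N → Fin K => entropy (empirical D)) - entropy p)
      = ∑ k, -((N:ℝ) *
          ((∑ D : Fin N → Fin K, wgt p D * (empirical D k * Real.log (empirical D k)))
            - p k * Real.log (p k))) := by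
    intro N
    have h1 : expect p (fun D : Fin N → Fin K => entropy (empirical D))
        = -∑ k, ∑ D : Fin N → Fin K, wgt p D * (empirical D k * Real.log (empirical D k)) := by
      calc expect p (fun D : Fin N → Fin K => entropy (empirical D))
          = ∑ D : Fin N → Fin K, (∏ n, p (D n))
              * (-∑ k, empirical D k * Real.log (empirical D k)) := rfl
        _ = -∑ D : Fin N → Fin K,
              ∑ k, wgt p D * (empirical D k * Real.log (empirical D k)) := by
            rw [← Finset.sum_neg_distrib]
            apply Finset.sum_congr rfl; intro D _
            rw [wgt, mul_neg, Finset.mul_sum]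
        _ = -∑ k, ∑ D : Fin N → Fin K,
              wgt p D * (empirical D k * Real.log (empirical D k)) := by
            rw [Finset.sum_comm]
    rw [h1, entropy]
    have e : (-∑ k, ∑ D : Fin N → Fin K, wgt p D * (empirical D k * Real.log (empirical D k)))
        - (-∑ k, p k * Real.log (p k))
        = ∑ k, (p k * Real.log (p k)
            - ∑ D : Fin N → Fin K, wgt p D * (empirical D k * Real.log (empirical D k))) := by
      rw [Finset.sum_sub_distrib]
      ring
    rw [e, Finset.mul_sum]
    apply Finset.sum_congr rfl; intro k _
    ring
  have hlim : Tendsto (fun N : ℕ => ∑ k, -((N:ℝ) *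
      ((∑ D : Fin N → Fin K, wgt p D * (empirical D k * Real.log (empirical D k)))
        - p k * Real.log (p k)))) atTop (nhds (∑ k : Fin K, -((1 - p k)/2))) :=
    tendsto_finset_sum _ (fun k _ => (per_k p hp hsum k).neg)
  have hval : (∑ k : Fin K, -((1 - p k)/2)) = -(((K : ℝ) - 1)/2) := by
    rw [Finset.sum_neg_distrib]
    congr 1
    rw [← Finset.sum_div, Finset.sum_sub_distrib, hsum]
    simp [Finset.card_univ]
  rw [hval] at hlim
  exact hlim.congr (fun N => (hmain N).symm)
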